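/- Let {Σ_N} be an arbitrary sequence of strategy profiles on a sequence of instances of the binary voting model, with excess expected vote share f^N. If there exist a constant η < 0 and an infinite set 𝒩 ⊆ ℕ such that √N·f^N ≤ η for every N ∈ 𝒩, then for every N ∈ 𝒩 the fidelity satisfies A(Σ_N) ≤ 1 − (1 − exp(−2η²))·min(P_L, P_H); in particular A(Σ_N) does not converge to 1. -/

import Mathlib

namespace Voting

/-- The two world states: `L` (low) and `H` (high). -/
inductive WState : Type
  | L
  | H
deriving DecidableEq

instance instFintypeWState : Fintype WState :=
  ⟨{WState.L, WState.H}, fun x => by cases x <;> simp⟩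

/-- The two alternatives: `A` (accept) and `R` (reject). -/
inductive Alt : Type
  | A
  | R
deriving DecidableEq

instance instFintypeAlt : Fintype Alt :=
  ⟨{Alt.A, Alt.R}, fun x => by cases x <;> simp⟩

/-- The shared parameters of a binary voting instance. -/
structure BParams where
  /-- majority threshold -/
  μ : ℝ
  hμ0 : 0 < μ
  hμ1 : μ < 1
  /-- prior of state `L` -/
  PL : ℝ
  /-- prior of state `H` -/
  PH : ℝ
  hPL : 0 < PL
  hPH : 0 < PH
  hPsum : PL + PH = 1
  /-- `Psig s ω` : probability of signal `s` in state `ω`; `true` is the signal `h`,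
  `false` is the signal `l`. -/
  Psig : Bool → WState → ℝ
  hPsig : ∀ s ω, 0 ≤ Psig s ω
  hPsigsum : ∀ ω, Psig false ω + Psig true ω = 1
  /-- positive correlation: `P_{hH} > P_{hL}` -/
  hcorr : Psig true WState.L < Psig true WState.H
  /-- upper bound of the utility functions -/
  B : ℕ
  hB : 0 < B

/-- A binary voting instance with `N` agents. -/
structure BInstance extends BParams where
  N : ℕ
  /-- the utility function of each agent -/
  u : Fin N → WState → Alt → ℕ
  hub : ∀ n ω a, u n ω a ≤ B
  huA : ∀ n, u n WState.L Alt.A < u n WState.H Alt.A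
  huR : ∀ n, u n WState.H Alt.R < u n WState.L Alt.R

/-- A (mixed) strategy profile: for each agent, the probability of voting for `A`
upon each signal. -/
abbrev Profile (I : BInstance) : Type := Fin I.N → Bool → ℝ

/-- All coordinates of the profile are genuine probabilities. -/
def ValidProfile (I : BInstance) (sp : Profile I) : Prop :=
  ∀ n s, 0 ≤ sp n s ∧ sp n s ≤ 1

/-- Probability that agent `n` votes for `A`, conditioned on the world state `ω`. -/
noncomputable def pA (I : BInstance) (sp : Profile I) (n : Fin I.N) (ω : WState) : ℝ :=
  I.Psig false ω * sp n false + I.Psig true ω * sp n true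

open Finset in
/-- `lambdaA I sp ω` : the probability that at least `μ·N` agents vote for `A`,
conditioned on the world state `ω` (conditionally on the state, the votes are independent,
agent `n` voting for `A` with probability `pA I sp n ω`). -/
noncomputable def lambdaA (I : BInstance) (sp : Profile I) (ω : WState) : ℝ :=
  ∑ v : Fin I.N → Bool,
    if I.μ * (I.N : ℝ) ≤ ((univ.filter fun n => v n = true).card : ℝ) then
      ∏ n, (if v n = true then pA I sp n ω else 1 - pA I sp n ω)
    else 0

/-- The fidelity of a strategy profile: the probability that the informed majority
decision is reached. -/
noncomputable def fid (I : BInstance) (sp : Profile I) : ℝ :=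
  I.PL * (1 - lambdaA I sp WState.L) + I.PH * lambdaA I sp WState.H

/-- The ex-ante expected utility of agent `n` under profile `sp`. -/
noncomputable def ut (I : BInstance) (sp : Profile I) (n : Fin I.N) : ℝ :=
  I.PL * (lambdaA I sp WState.L * (I.u n WState.L Alt.A : ℝ)
      + (1 - lambdaA I sp WState.L) * (I.u n WState.L Alt.R : ℝ))
    + I.PH * (lambdaA I sp WState.H * (I.u n WState.H Alt.A : ℝ)
      + (1 - lambdaA I sp WState.H) * (I.u n WState.H Alt.R : ℝ))

/-- A friendly agent prefers `A` in both states. -/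
def Friendly (I : BInstance) (n : Fin I.N) : Prop :=
  ∀ ω, I.u n ω Alt.R < I.u n ω Alt.A

/-- An unfriendly agent prefers `R` in both states. -/
def Unfriendly (I : BInstance) (n : Fin I.N) : Prop :=
  ∀ ω, I.u n ω Alt.A < I.u n ω Alt.R

/-- A contingent agent prefers `A` in state `H` and `R` in state `L`. -/
def Contingent (I : BInstance) (n : Fin I.N) : Prop :=
  I.u n WState.H Alt.R < I.u n WState.H Alt.A ∧ I.u n WState.L Alt.A < I.u n WState.L Alt.R

/-- A profile is regular if every friendly agent always votes for `A` and every
unfriendly agent always votes for `R`. -/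
def Regular (I : BInstance) (sp : Profile I) : Prop :=
  (∀ n, Friendly I n → ∀ s, sp n s = 1) ∧ (∀ n, Unfriendly I n → ∀ s, sp n s = 0)

/-- `ε`-strong Bayes Nash Equilibrium: no coalition `D` can deviate so that no member
is worse off and some member gains more than `ε`. -/
def IsEpsBNE (I : BInstance) (sp : Profile I) (ε : ℝ) : Prop :=
  ¬ ∃ (D : Set (Fin I.N)) (sp' : Profile I),
      ValidProfile I sp' ∧
      (∀ n, n ∉ D → sp' n = sp n) ∧
      (∀ n ∈ D, ut I sp n ≤ ut I sp' n) ∧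
      (∃ n ∈ D, ut I sp n + ε < ut I sp' n)

/-- Number of friendly agents. -/
noncomputable def friendlyCount (I : BInstance) : ℕ := {n | Friendly I n}.ncard

/-- Number of unfriendly agents. -/
noncomputable def unfriendlyCount (I : BInstance) : ℕ := {n | Unfriendly I n}.ncard

/-- Number of contingent agents. -/
noncomputable def contingentCount (I : BInstance) : ℕ := {n | Contingent I n}.ncard

/-- A sequence of binary voting instances sharing the same parameters, in which the
instance indexed by `N` has `N` agents. -/
structure BSeq where
  params : BParams
  inst : ℕ → BInstance
  hN : ∀ N, (inst N).N = N
  hshare : ∀ N, (inst N).toBParams = params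

/-- A sequence of binary voting instances with fixed approximate fractions
`(αF, αU, αC)` of friendly, unfriendly and contingent agents. -/
structure BSeqFrac extends BSeq where
  αF : ℝ
  αU : ℝ
  αC : ℝ
  hαF0 : 0 ≤ αF
  hαU0 : 0 ≤ αU
  hαC0 : 0 ≤ αC
  hαsum : αF + αU + αC = 1
  hαFμ : αF < params.μ
  hαUμ : αU < 1 - params.μ
  hNF : ∀ N : ℕ, friendlyCount (inst N) = ⌊αF * (N : ℝ)⌋₊
  hNU : ∀ N : ℕ, unfriendlyCount (inst N) = ⌊αU * (N : ℝ)⌋₊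
  hNC : ∀ N : ℕ, contingentCount (inst N) = N - ⌊αF * (N : ℝ)⌋₊ - ⌊αU * (N : ℝ)⌋₊

/-- Excess expected vote share of `A` in state `H`. -/
noncomputable def fH (I : BInstance) (sp : Profile I) : ℝ :=
  (∑ n, pA I sp n WState.H) / (I.N : ℝ) - I.μ

/-- Excess expected vote share of `R` in state `L`. -/
noncomputable def fL (I : BInstance) (sp : Profile I) : ℝ :=
  (∑ n, (1 - pA I sp n WState.L)) / (I.N : ℝ) - (1 - I.μ)

/-- The excess expected vote share `f = min (f_H, f_L)`. -/
noncomputable def fmin (I : BInstance) (sp : Profile I) : ℝ := min (fH I sp) (fL I sp)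


open Finset Real

/-- Monotonicity from a nonnegative derivative on `[0, ∞)`. -/
lemma le_of_hasDerivAt_nonneg {f f' : ℝ → ℝ} (hf : ∀ x, HasDerivAt f (f' x) x)
    (h0 : ∀ x, 0 ≤ x → 0 ≤ f' x) {t : ℝ} (ht : 0 ≤ t) : f 0 ≤ f t := by
  have hmono : MonotoneOn f (Set.Ici 0) := by
    refine monotoneOn_of_deriv_nonneg (convex_Ici 0)
      (fun x _ => (hf x).continuousAt.continuousWithinAt)
      (fun x _ => (hf x).differentiableAt.differentiableWithinAt) ?_
    intro x hx
    rw [interior_Ici] at hx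
    rw [(hf x).deriv]
    exact h0 x (le_of_lt hx)
  exact hmono Set.self_mem_Ici ht ht

/-- Hoeffding's lemma for a Bernoulli random variable, `t ≥ 0`. -/
lemma hoeffding_bernoulli {p : ℝ} (hp0 : 0 ≤ p) (hp1 : p ≤ 1) {t : ℝ} (ht : 0 ≤ t) :
    Real.exp t * p + (1 - p) ≤ Real.exp (t * p + t ^ 2 / 8) := by
  set u : ℝ → ℝ := fun x => 1 - p + p * Real.exp x with hu_def
  have hupos : ∀ x, 0 < u x := by
    intro x
    rcases eq_or_lt_of_le hp1 with h | h
    · simp [hu_def, h, Real.exp_pos]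
    · have h1 : 0 < 1 - p := by linarith
      have h2 : 0 ≤ p * Real.exp x := by positivity
      simp only [hu_def]; linarith
  have hu' : ∀ x, HasDerivAt u (p * Real.exp x) x := by
    intro x
    exact ((Real.hasDerivAt_exp x).const_mul p).const_add (1 - p)
  set g : ℝ → ℝ := fun x => p + x / 4 - p * Real.exp x / u x with hg_def
  set h : ℝ → ℝ := fun x => p * x + x ^ 2 / 8 - Real.log (u x) with hh_def
  have hg' : ∀ x, HasDerivAt g
      (1 / 4 - (p * Real.exp x * u x - p * Real.exp x * (p * Real.exp x)) / (u x) ^ 2) x := by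
    intro x
    have h1 : HasDerivAt (fun x => p * Real.exp x) (p * Real.exp x) x :=
      (Real.hasDerivAt_exp x).const_mul p
    have h2 : HasDerivAt (fun x => p * Real.exp x / u x)
        ((p * Real.exp x * u x - p * Real.exp x * (p * Real.exp x)) / (u x) ^ 2) x :=
      h1.div (hu' x) (hupos x).ne'
    have h3 : HasDerivAt (fun x : ℝ => p + x / 4) (1 / 4) x := by
      simpa using ((hasDerivAt_id x).div_const 4).const_add p
    exact h3.sub h2
  have hh' : ∀ x, HasDerivAt h (g x) x := by
    intro x
    have h1 : HasDerivAt (fun x => p * x) p x := by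
      simpa using (hasDerivAt_id x).const_mul p
    have h2 : HasDerivAt (fun x : ℝ => x ^ 2 / 8) (x / 4) x := by
      have := (hasDerivAt_pow 2 x).div_const 8
      rw [show x / 4 = ((2:ℕ):ℝ) * x ^ (2 - 1) / 8 by rw [show (2:ℕ) - 1 = 1 from rfl]; push_cast; ring]
      exact this
    have h3 : HasDerivAt (fun x => Real.log (u x)) (p * Real.exp x / u x) x :=
      (hu' x).log (hupos x).ne'
    exact (h1.add h2).sub h3
  have hg2nonneg : ∀ x, 0 ≤ x → 0 ≤ 1 / 4 -
      (p * Real.exp x * u x - p * Real.exp x * (p * Real.exp x)) / (u x) ^ 2 := by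
    intro x _
    have hux : 0 < u x := hupos x
    have key : (p * Real.exp x * u x - p * Real.exp x * (p * Real.exp x)) / (u x) ^ 2 ≤ 1 / 4 := by
      rw [div_le_iff₀ (by positivity)]
      have hueq : u x = 1 - p + p * Real.exp x := rfl
      nlinarith [sq_nonneg ((1 - p) - p * Real.exp x)]
    linarith
  have hgnonneg : ∀ x, 0 ≤ x → 0 ≤ g x := by
    intro x hx
    have h0 : g 0 = 0 := by
      have : u 0 = 1 := by simp [hu_def]
      simp [hg_def, this]
    have := le_of_hasDerivAt_nonneg hg' hg2nonneg hx
    linarith [h0 ▸ this]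
  have hhn : 0 ≤ h t := by
    have h0 : h 0 = 0 := by
      have : u 0 = 1 := by simp [hu_def]
      simp [hh_def, this]
    have := le_of_hasDerivAt_nonneg hh' hgnonneg ht
    linarith [h0 ▸ this]
  have hlog : Real.log (u t) ≤ p * t + t ^ 2 / 8 := by
    have h2 : (0:ℝ) ≤ p * t + t ^ 2 / 8 - Real.log (u t) := hhn
    linarith
  have h2 := (Real.log_le_iff_le_exp (hupos t)).mp hlog
  have hue : u t = Real.exp t * p + (1 - p) := by simp [hu_def]; ring
  rw [hue] at h2
  rw [mul_comm t p]
  exact h2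

lemma sum_prod_bool {N : ℕ} (g : Fin N → Bool → ℝ) :
    ∑ v : Fin N → Bool, ∏ n, g n (v n) = ∏ n, (g n true + g n false) := by
  rw [← Fintype.prod_sum fun n b => g n b]
  exact Finset.prod_congr rfl fun n _ => by simp [Fintype.sum_bool]

/-- Chernoff–Hoeffding upper-tail bound for a sum of independent Bernoulli variables. -/
lemma chernoff {N : ℕ} (hN : 0 < N) (p : Fin N → ℝ) (hp0 : ∀ n, 0 ≤ p n)
    (hp1 : ∀ n, p n ≤ 1) (a c : ℝ) (hc : 0 ≤ c) (hmean : ∑ n, p n ≤ a - c) :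
    ∑ v : Fin N → Bool,
      (if a ≤ (((Finset.univ.filter fun n => v n = true).card : ℕ) : ℝ) then
        ∏ n, (if v n = true then p n else 1 - p n) else 0)
      ≤ Real.exp (-2 * c ^ 2 / N) := by
  have hNR : (0:ℝ) < N := by exact_mod_cast hN
  set t : ℝ := 4 * c / N with ht_def
  have ht0 : 0 ≤ t := by positivity
  have hprodnn : ∀ v : Fin N → Bool, 0 ≤ ∏ n, (if v n = true then p n else 1 - p n) := by
    intro v
    refine Finset.prod_nonneg fun n _ => ?_
    split
    · exact hp0 n
    · linarith [hp1 n]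
  have step1 : ∀ v : Fin N → Bool,
      (if a ≤ (((Finset.univ.filter fun n => v n = true).card : ℕ) : ℝ) then
        ∏ n, (if v n = true then p n else 1 - p n) else 0)
      ≤ Real.exp (-(t * a)) * ∏ n, (if v n = true then Real.exp t * p n else 1 - p n) := by
    intro v
    have hcnt : (((Finset.univ.filter fun n => v n = true).card : ℕ) : ℝ)
        = ∑ n, (if v n = true then (1:ℝ) else 0) := by
      rw [Finset.card_filter]
      push_cast
      rfl
    have hsplit : Real.exp (t * ((((Finset.univ.filter fun n => v n = true).card : ℕ) : ℝ) - a))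
          * ∏ n, (if v n = true then p n else 1 - p n)
        = Real.exp (-(t * a)) * ∏ n, (if v n = true then Real.exp t * p n else 1 - p n) := by
      rw [hcnt, mul_sub, sub_eq_add_neg, Real.exp_add,
        mul_comm (Real.exp _) (Real.exp (-(t * a))), mul_assoc]
      congr 1
      rw [Finset.mul_sum, Real.exp_sum, ← Finset.prod_mul_distrib]
      exact Finset.prod_congr rfl fun n _ => by by_cases hvn : v n = true <;> simp [hvn]
    rw [← hsplit]
    split
    · rename_i hcond
      have h1 : (1:ℝ) ≤ Real.exp (t * ((((Finset.univ.filter fun n => v n = true).card : ℕ) : ℝ) - a)) := by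
        rw [← Real.exp_zero]
        apply Real.exp_le_exp.mpr
        have h2 : 0 ≤ (((Finset.univ.filter fun n => v n = true).card : ℕ) : ℝ) - a := by linarith
        exact mul_nonneg ht0 h2
      nlinarith [hprodnn v, h1]
    · exact mul_nonneg (Real.exp_pos _).le (hprodnn v)
  have step2 : ∑ v : Fin N → Bool,
      Real.exp (-(t * a)) * ∏ n, (if v n = true then Real.exp t * p n else 1 - p n)
      = Real.exp (-(t * a)) * ∏ n, (Real.exp t * p n + (1 - p n)) := by
    rw [← Finset.mul_sum]
    congr 1
    exact sum_prod_bool fun n b => if b = true then Real.exp t * p n else 1 - p n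
  have step3 : ∏ n, (Real.exp t * p n + (1 - p n)) ≤ Real.exp (t * ∑ n, p n + N * t ^ 2 / 8) := by
    calc ∏ n, (Real.exp t * p n + (1 - p n))
        ≤ ∏ n, Real.exp (t * p n + t ^ 2 / 8) := by
          refine Finset.prod_le_prod (fun n _ => ?_) (fun n _ => ?_)
          · have h1 : 0 ≤ Real.exp t * p n := mul_nonneg (Real.exp_pos t).le (hp0 n)
            linarith [hp1 n]
          · exact hoeffding_bernoulli (hp0 n) (hp1 n) ht0
      _ = Real.exp (∑ n, (t * p n + t ^ 2 / 8)) := (Real.exp_sum _ _).symm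
      _ = Real.exp (t * ∑ n, p n + N * t ^ 2 / 8) := by
          rw [Finset.sum_add_distrib, ← Finset.mul_sum, Finset.sum_const]
          simp [Finset.card_univ]
          ring_nf
  calc ∑ v : Fin N → Bool,
      (if a ≤ (((Finset.univ.filter fun n => v n = true).card : ℕ) : ℝ) then
        ∏ n, (if v n = true then p n else 1 - p n) else 0)
      ≤ ∑ v : Fin N → Bool,
        Real.exp (-(t * a)) * ∏ n, (if v n = true then Real.exp t * p n else 1 - p n) :=
        Finset.sum_le_sum fun v _ => step1 v
    _ = Real.exp (-(t * a)) * ∏ n, (Real.exp t * p n + (1 - p n)) := step2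
    _ ≤ Real.exp (-(t * a)) * Real.exp (t * ∑ n, p n + N * t ^ 2 / 8) :=
        mul_le_mul_of_nonneg_left step3 (Real.exp_pos _).le
    _ = Real.exp (t * (∑ n, p n - a) + N * t ^ 2 / 8) := by
        rw [← Real.exp_add]; ring_nf
    _ ≤ Real.exp (-(t * c) + N * t ^ 2 / 8) := by
        apply Real.exp_le_exp.mpr
        have : t * (∑ n, p n - a) ≤ t * (-c) := by
          apply mul_le_mul_of_nonneg_left _ ht0
          linarith
        linarith
    _ = Real.exp (-2 * c ^ 2 / N) := by
        congr 1
        rw [ht_def]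
        field_simp
        ring

lemma pA_nonneg (I : BInstance) (s : Profile I) (hv : ValidProfile I s) (n : Fin I.N)
    (ω : WState) : 0 ≤ pA I s n ω :=
  add_nonneg (mul_nonneg (I.hPsig false ω) (hv n false).1)
    (mul_nonneg (I.hPsig true ω) (hv n true).1)

lemma pA_le_one (I : BInstance) (s : Profile I) (hv : ValidProfile I s) (n : Fin I.N)
    (ω : WState) : pA I s n ω ≤ 1 := by
  have h1 := mul_le_mul_of_nonneg_left (hv n false).2 (I.hPsig false ω)
  have h2 := mul_le_mul_of_nonneg_left (hv n true).2 (I.hPsig true ω)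
  have := I.hPsigsum ω
  unfold pA
  linarith

lemma prod_weights_nonneg (I : BInstance) (s : Profile I) (hv : ValidProfile I s)
    (ω : WState) (v : Fin I.N → Bool) :
    0 ≤ ∏ n, (if v n = true then pA I s n ω else 1 - pA I s n ω) := by
  refine Finset.prod_nonneg fun n _ => ?_
  split
  · exact pA_nonneg I s hv n ω
  · linarith [pA_le_one I s hv n ω]

lemma sum_prod_weights (I : BInstance) (s : Profile I) (ω : WState) :
    ∑ v : Fin I.N → Bool, ∏ n, (if v n = true then pA I s n ω else 1 - pA I s n ω) = 1 := by
  rw [sum_prod_bool fun n b => if b = true then pA I s n ω else 1 - pA I s n ω]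
  calc ∏ n, ((if true = true then pA I s n ω else 1 - pA I s n ω)
        + (if false = true then pA I s n ω else 1 - pA I s n ω))
      = ∏ n : Fin I.N, (1:ℝ) := Finset.prod_congr rfl fun n _ => by simp
    _ = 1 := Finset.prod_const_one

lemma lambdaA_nonneg (I : BInstance) (s : Profile I) (hv : ValidProfile I s) (ω : WState) :
    0 ≤ lambdaA I s ω := by
  refine Finset.sum_nonneg fun v _ => ?_
  split
  · exact prod_weights_nonneg I s hv ω v
  · exact le_refl 0

lemma lambdaA_le_one (I : BInstance) (s : Profile I) (hv : ValidProfile I s) (ω : WState) :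
    lambdaA I s ω ≤ 1 := by
  calc lambdaA I s ω
      ≤ ∑ v : Fin I.N → Bool, ∏ n, (if v n = true then pA I s n ω else 1 - pA I s n ω) := by
        refine Finset.sum_le_sum fun v _ => ?_
        split
        · exact le_refl _
        · exact prod_weights_nonneg I s hv ω v
    _ = 1 := sum_prod_weights I s ω

/-- Fidelity bound in the case where the mean `A`-vote count in state `H` is below the
threshold by `c`. -/
lemma fid_bound_H (I : BInstance) (s : Profile I) (hv : ValidProfile I s) (hN : 0 < I.N)
    (c : ℝ) (hc : 0 ≤ c)
    (hmean : ∑ n, pA I s n WState.H ≤ I.μ * (I.N : ℝ) - c) :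
    fid I s ≤ 1 - (1 - Real.exp (-2 * c ^ 2 / (I.N : ℝ))) * min I.PL I.PH := by
  have hlamH : lambdaA I s WState.H ≤ Real.exp (-2 * c ^ 2 / (I.N : ℝ)) := by
    have := chernoff hN (fun n => pA I s n WState.H) (fun n => pA_nonneg I s hv n _)
      (fun n => pA_le_one I s hv n _) (I.μ * (I.N : ℝ)) c hc hmean
    exact this
  have hlamL : 0 ≤ lambdaA I s WState.L := lambdaA_nonneg I s hv _
  have hE1 : Real.exp (-2 * c ^ 2 / (I.N : ℝ)) ≤ 1 := by
    rw [← Real.exp_zero]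
    apply Real.exp_le_exp.mpr
    have : (0:ℝ) < (I.N : ℝ) := by exact_mod_cast hN
    have h2 : 0 ≤ c ^ 2 := sq_nonneg c
    rw [div_nonpos_iff]
    right
    constructor <;> nlinarith
  have hmin1 : min I.PL I.PH ≤ I.PH := min_le_right _ _
  have hmin0 : 0 ≤ min I.PL I.PH := le_min I.hPL.le I.hPH.le
  have hsum := I.hPsum
  unfold fid
  nlinarith [I.hPL, I.hPH, mul_le_mul_of_nonneg_left hlamH I.hPH.le,
    mul_nonneg I.hPL.le hlamL,
    mul_le_mul_of_nonneg_right hmin1 (by linarith : (0:ℝ) ≤ 1 - Real.exp (-2 * c ^ 2 / (I.N : ℝ)))]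

/-- Fidelity bound in the case where the mean `R`-vote count in state `L` is below the
threshold by `c`. -/
lemma fid_bound_L (I : BInstance) (s : Profile I) (hv : ValidProfile I s) (hN : 0 < I.N)
    (c : ℝ) (hc : 0 ≤ c)
    (hmean : ∑ n, (1 - pA I s n WState.L) ≤ (1 - I.μ) * (I.N : ℝ) - c) :
    fid I s ≤ 1 - (1 - Real.exp (-2 * c ^ 2 / (I.N : ℝ))) * min I.PL I.PH := by
  set p : Fin I.N → ℝ := fun n => pA I s n WState.L with hp_def
  -- the complement of lambdaA in state L
  set G : (Fin I.N → Bool) → ℝ := fun v =>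
    if ¬ (I.μ * (I.N : ℝ) ≤ (((Finset.univ.filter fun n => v n = true).card : ℕ) : ℝ)) then
      ∏ n, (if v n = true then p n else 1 - p n) else 0 with hG_def
  have hcompl : 1 - lambdaA I s WState.L = ∑ v : Fin I.N → Bool, G v := by
    have h1 : lambdaA I s WState.L + ∑ v : Fin I.N → Bool, G v = 1 := by
      unfold lambdaA
      rw [← Finset.sum_add_distrib]
      have h2 : ∑ v : Fin I.N → Bool,
          ((if I.μ * (I.N : ℝ) ≤ (((Finset.univ.filter fun n => v n = true).card : ℕ) : ℝ) then
              ∏ n, (if v n = true then pA I s n WState.L else 1 - pA I s n WState.L) else 0)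
            + G v)
          = ∑ v : Fin I.N → Bool,
            ∏ n, (if v n = true then pA I s n WState.L else 1 - pA I s n WState.L) := by
        refine Finset.sum_congr rfl fun v _ => ?_
        by_cases hcond : I.μ * (I.N : ℝ) ≤ (((Finset.univ.filter fun n => v n = true).card : ℕ) : ℝ)
        · simp [hG_def, hcond]
        · simp [hG_def, hp_def, not_le.mp hcond]
      rw [h2, sum_prod_weights I s WState.L]
    linarith
  -- reindex by negating every vote
  have hbij : Function.Bijective (fun v : Fin I.N → Bool => fun n => !(v n)) := by
    have hinv : Function.Involutive (fun v : Fin I.N → Bool => fun n => !(v n)) := by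
      intro v; funext n; simp
    exact hinv.bijective
  have hreidx : ∑ v : Fin I.N → Bool, G v
      = ∑ v : Fin I.N → Bool, G (fun n => !(v n)) :=
    (Fintype.sum_bijective _ hbij _ _ fun v => rfl).symm
  -- cardinality of negated filter
  have hcard : ∀ v : Fin I.N → Bool,
      ((Finset.univ.filter fun n => (!(v n)) = true).card : ℕ)
        = I.N - ((Finset.univ.filter fun n => v n = true).card : ℕ) := by
    intro v
    have heqset : (Finset.univ.filter fun n => (!(v n)) = true)
        = (Finset.univ.filter fun n => ¬ (v n = true)) := by
      ext n
      simp
    have hadd := Finset.card_filter_add_card_filter_not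
      (s := (Finset.univ : Finset (Fin I.N))) (p := fun n => v n = true)
    rw [heqset]
    have hcu : (Finset.univ : Finset (Fin I.N)).card = I.N := by simp
    omega
  have hcle : ∀ v : Fin I.N → Bool,
      ((Finset.univ.filter fun n => v n = true).card : ℕ) ≤ I.N := by
    intro v
    calc ((Finset.univ.filter fun n => v n = true).card : ℕ)
        ≤ (Finset.univ : Finset (Fin I.N)).card := Finset.card_filter_le _ _
      _ = I.N := by simp
  -- termwise bound by the Chernoff integrand for q = 1 - p
  set q : Fin I.N → ℝ := fun n => 1 - p n with hq_def
  have hterm : ∀ v : Fin I.N → Bool, G (fun n => !(v n)) ≤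
      (if (1 - I.μ) * (I.N : ℝ) ≤ (((Finset.univ.filter fun n => v n = true).card : ℕ) : ℝ) then
        ∏ n, (if v n = true then q n else 1 - q n) else 0) := by
    intro v
    have hprod : ∏ n, (if (!(v n)) = true then p n else 1 - p n)
        = ∏ n, (if v n = true then q n else 1 - q n) := by
      refine Finset.prod_congr rfl fun n _ => ?_
      by_cases hvn : v n = true
      · simp [hvn, hq_def]
      · have : v n = false := by simp at hvn; exact hvn
        simp [this, hq_def]
    have hqnn : 0 ≤ ∏ n, (if v n = true then q n else 1 - q n) := by
      refine Finset.prod_nonneg fun n _ => ?_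
      have h1 := pA_nonneg I s hv n WState.L
      have h2 := pA_le_one I s hv n WState.L
      split
      · simp only [hq_def]; linarith
      · simp only [hq_def]; linarith
    have hcR : ((((Finset.univ.filter fun n => (!(v n)) = true).card : ℕ)) : ℝ)
        = (I.N : ℝ) - (((Finset.univ.filter fun n => v n = true).card : ℕ) : ℝ) := by
      rw [hcard v]
      have := hcle v
      push_cast [Nat.cast_sub this]
      ring
    simp only [hG_def]
    split
    · rename_i hc1
      rw [hcR] at hc1
      push_neg at hc1
      have hc2 : (1 - I.μ) * (I.N : ℝ)
          ≤ (((Finset.univ.filter fun n => v n = true).card : ℕ) : ℝ) := by nlinarith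
      rw [if_pos hc2, hprod]
    · split
      · exact hqnn
      · exact le_refl 0
  -- apply Chernoff to q
  have hq0 : ∀ n, 0 ≤ q n := by
    intro n; have := pA_le_one I s hv n WState.L; simp only [hq_def, hp_def]; linarith
  have hq1 : ∀ n, q n ≤ 1 := by
    intro n; have := pA_nonneg I s hv n WState.L; simp only [hq_def, hp_def]; linarith
  have hqmean : ∑ n, q n ≤ (1 - I.μ) * (I.N : ℝ) - c := by
    simpa [hq_def, hp_def] using hmean
  have hcher := chernoff hN q hq0 hq1 ((1 - I.μ) * (I.N : ℝ)) c hc hqmean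
  have hlamL : 1 - lambdaA I s WState.L ≤ Real.exp (-2 * c ^ 2 / (I.N : ℝ)) := by
    rw [hcompl, hreidx]
    calc ∑ v : Fin I.N → Bool, G (fun n => !(v n))
        ≤ ∑ v : Fin I.N → Bool,
          (if (1 - I.μ) * (I.N : ℝ) ≤ (((Finset.univ.filter fun n => v n = true).card : ℕ) : ℝ)
            then ∏ n, (if v n = true then q n else 1 - q n) else 0) :=
          Finset.sum_le_sum fun v _ => hterm v
      _ ≤ Real.exp (-2 * c ^ 2 / (I.N : ℝ)) := hcher
  have hlamH : lambdaA I s WState.H ≤ 1 := lambdaA_le_one I s hv _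
  have hlamL0 : 0 ≤ lambdaA I s WState.L := lambdaA_nonneg I s hv _
  have hE1 : Real.exp (-2 * c ^ 2 / (I.N : ℝ)) ≤ 1 := by
    rw [← Real.exp_zero]
    apply Real.exp_le_exp.mpr
    have : (0:ℝ) < (I.N : ℝ) := by exact_mod_cast hN
    have h2 : 0 ≤ c ^ 2 := sq_nonneg c
    rw [div_nonpos_iff]
    right
    constructor <;> nlinarith
  have hmin1 : min I.PL I.PH ≤ I.PL := min_le_left _ _
  have hmin0 : 0 ≤ min I.PL I.PH := le_min I.hPL.le I.hPH.le
  have hsum := I.hPsum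
  unfold fid
  nlinarith [I.hPL, I.hPH, mul_le_mul_of_nonneg_left hlamL I.hPL.le,
    mul_le_mul_of_nonneg_left hlamH I.hPH.le,
    mul_le_mul_of_nonneg_right hmin1 (by linarith : (0:ℝ) ≤ 1 - Real.exp (-2 * c ^ 2 / (I.N : ℝ)))]
/-- Theorem 4, second case. If `√N·f^N ≤ η` for some constant `η < 0`
along an infinite set `𝒩` of indices, then for every `N ∈ 𝒩` the fidelity is at most
`1 - (1 - exp(-2η²))·min(P_L, P_H)`; in particular it does not converge to `1`. -/
theorem fidelity_upper_bound_of_negative_excess_share (S : BSeq)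
    (sp : ∀ N : ℕ, Profile (S.inst N))
    (hval : ∀ N, ValidProfile (S.inst N) (sp N))
    (η : ℝ) (hη : η < 0) (Nset : Set ℕ) (hinf : Nset.Infinite)
    (hle : ∀ N ∈ Nset, Real.sqrt (N : ℝ) * fmin (S.inst N) (sp N) ≤ η) :
    (∀ N ∈ Nset, fid (S.inst N) (sp N) ≤
        1 - (1 - Real.exp (-2 * η ^ 2)) * min S.params.PL S.params.PH) ∧
    ¬ Filter.Tendsto (fun N => fid (S.inst N) (sp N)) Filter.atTop (nhds 1) := by
  have key : ∀ N ∈ Nset, fid (S.inst N) (sp N) ≤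
      1 - (1 - Real.exp (-2 * η ^ 2)) * min S.params.PL S.params.PH := by
    intro N hNmem
    have hmin := hle N hNmem
    have hN0 : N ≠ 0 := by
      intro h
      subst h
      simp only [Nat.cast_zero, Real.sqrt_zero, zero_mul] at hmin
      linarith
    have hNpos : 0 < (S.inst N).N := by rw [S.hN N]; omega
    have hNcast : (((S.inst N).N : ℕ) : ℝ) = (N : ℝ) := by rw [S.hN N]
    have hNR : (0:ℝ) < (N : ℝ) := by
      have : 0 < N := Nat.pos_of_ne_zero hN0
      exact_mod_cast this
    have hsq : Real.sqrt (N:ℝ) * Real.sqrt (N:ℝ) = (N:ℝ) := Real.mul_self_sqrt hNR.le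
    have hsqpos : 0 < Real.sqrt (N:ℝ) := Real.sqrt_pos.mpr hNR
    set c : ℝ := -(η * Real.sqrt (N:ℝ)) with hc_def
    have hc0 : 0 ≤ c := by
      rw [hc_def]
      nlinarith
    have hcsq : c ^ 2 = η ^ 2 * (N:ℝ) := by
      have h1 : c ^ 2 = η ^ 2 * (Real.sqrt (N:ℝ) * Real.sqrt (N:ℝ)) := by rw [hc_def]; ring
      rw [h1, hsq]
    have hexp_eq : Real.exp (-2 * c ^ 2 / (((S.inst N).N : ℕ) : ℝ)) = Real.exp (-2 * η ^ 2) := by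
      congr 1
      rw [hNcast, hcsq]
      field_simp
    have hPL_eq : S.params.PL = (S.inst N).PL := by rw [← S.hshare N]
    have hPH_eq : S.params.PH = (S.inst N).PH := by rw [← S.hshare N]
    rw [hPL_eq, hPH_eq, ← hexp_eq]
    unfold fmin at hmin
    rcases min_cases (fH (S.inst N) (sp N)) (fL (S.inst N) (sp N)) with ⟨heq, _⟩ | ⟨heq, _⟩
    · -- case f_H is the minimum
      rw [heq] at hmin
      have hNfH : (N:ℝ) * fH (S.inst N) (sp N) ≤ Real.sqrt (N:ℝ) * η := by
        calc (N:ℝ) * fH (S.inst N) (sp N)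
            = Real.sqrt (N:ℝ) * (Real.sqrt (N:ℝ) * fH (S.inst N) (sp N)) := by
              rw [← mul_assoc, hsq]
          _ ≤ Real.sqrt (N:ℝ) * η := mul_le_mul_of_nonneg_left hmin hsqpos.le
      have hsum : (∑ n, pA (S.inst N) (sp N) n WState.H)
          = (fH (S.inst N) (sp N) + (S.inst N).μ) * (((S.inst N).N : ℕ) : ℝ) := by
        unfold fH
        have : (((S.inst N).N : ℕ) : ℝ) ≠ 0 := by rw [hNcast]; exact hNR.ne'
        field_simp
        ring
      have hmean : ∑ n, pA (S.inst N) (sp N) n WState.H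
          ≤ (S.inst N).μ * (((S.inst N).N : ℕ) : ℝ) - c := by
        rw [hsum, hNcast, hc_def]
        nlinarith [hNfH]
      exact fid_bound_H (S.inst N) (sp N) (hval N) hNpos c hc0 hmean
    · -- case f_L is the minimum
      rw [heq] at hmin
      have hNfL : (N:ℝ) * fL (S.inst N) (sp N) ≤ Real.sqrt (N:ℝ) * η := by
        calc (N:ℝ) * fL (S.inst N) (sp N)
            = Real.sqrt (N:ℝ) * (Real.sqrt (N:ℝ) * fL (S.inst N) (sp N)) := by
              rw [← mul_assoc, hsq]
          _ ≤ Real.sqrt (N:ℝ) * η := mul_le_mul_of_nonneg_left hmin hsqpos.le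
      have hsum : (∑ n, (1 - pA (S.inst N) (sp N) n WState.L))
          = (fL (S.inst N) (sp N) + (1 - (S.inst N).μ)) * (((S.inst N).N : ℕ) : ℝ) := by
        unfold fL
        have : (((S.inst N).N : ℕ) : ℝ) ≠ 0 := by rw [hNcast]; exact hNR.ne'
        field_simp
        ring
      have hmean : ∑ n, (1 - pA (S.inst N) (sp N) n WState.L)
          ≤ (1 - (S.inst N).μ) * (((S.inst N).N : ℕ) : ℝ) - c := by
        rw [hsum, hNcast, hc_def]
        nlinarith [hNfL]
      exact fid_bound_L (S.inst N) (sp N) (hval N) hNpos c hc0 hmean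
  refine ⟨key, ?_⟩
  intro htend
  set δ : ℝ := (1 - Real.exp (-2 * η ^ 2)) * min S.params.PL S.params.PH with hδ_def
  have hδpos : 0 < δ := by
    have hE : Real.exp (-2 * η ^ 2) < 1 := by
      rw [← Real.exp_zero]
      apply Real.exp_lt_exp.mpr
      nlinarith [sq_nonneg η, hη]
    have hm : 0 < min S.params.PL S.params.PH := lt_min S.params.hPL S.params.hPH
    rw [hδ_def]
    nlinarith
  have hev : ∀ᶠ N in Filter.atTop, 1 - δ < fid (S.inst N) (sp N) :=
    htend.eventually (eventually_gt_nhds (by linarith))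
  rcases Filter.eventually_atTop.mp hev with ⟨M, hM⟩
  rcases hinf.exists_gt M with ⟨N, hNmem, hMN⟩
  have h1 := key N hNmem
  have h2 := hM N hMN.le
  linarith

end Voting
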